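/- Let Z(F) = tr(GᵀF(FᵀF + εI)⁻¹FᵀG) viewed as a function of F ∈ ℝ^{T×V} with G fixed and GᵀG = I. Writing R = (FᵀF+εI)⁻¹FᵀG, the gradient of Z with respect to F satisfies ∂Z/∂F = 2GRᵀ − 2FRRᵀ, equivalently ∂Z/∂Fᵀ = 2RGᵀ − 2RRᵀFᵀ. -/

import Mathlib

open Matrix

attribute [local instance] Matrix.linftyOpNormedAddCommGroup Matrix.linftyOpNormedSpace
  Matrix.linftyOpNormedRing Matrix.linftyOpNormedAlgebra

section aux

variable {l m n : Type*} [Fintype l] [Fintype m] [Fintype n]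

theorem isBoundedBilinearMap_matMul :
    IsBoundedBilinearMap ℝ (fun p : Matrix l m ℝ × Matrix m n ℝ => p.1 * p.2) where
  add_left _ _ _ := Matrix.add_mul _ _ _
  smul_left _ _ _ := Matrix.smul_mul _ _ _
  add_right _ _ _ := Matrix.mul_add _ _ _
  smul_right _ _ _ := Matrix.mul_smul _ _ _
  bound := ⟨1, one_pos, fun A B => by simpa using Matrix.linfty_opNorm_mul A B⟩

theorem HasDerivAt.matMul {f : ℝ → Matrix l m ℝ} {g : ℝ → Matrix m n ℝ}
    {f' : Matrix l m ℝ} {g' : Matrix m n ℝ} {x : ℝ}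
    (hf : HasDerivAt f f' x) (hg : HasDerivAt g g' x) :
    HasDerivAt (fun t => f t * g t) (f' * g x + f x * g') x := by
  have h := ((isBoundedBilinearMap_matMul (l := l) (m := m) (n := n)).hasFDerivAt
      (f x, g x)).comp_hasDerivAt x (hf.prodMk hg)
  rw [IsBoundedBilinearMap.deriv_apply] at h
  exact h.congr_deriv (by abel)

theorem HasDerivAt.matTranspose {f : ℝ → Matrix l m ℝ} {f' : Matrix l m ℝ} {x : ℝ}
    (hf : HasDerivAt f f' x) : HasDerivAt (fun t => (f t)ᵀ) f'ᵀ x := by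
  let φ := LinearMap.toContinuousLinearMap
    ((Matrix.transposeLinearEquiv l m ℝ ℝ).toLinearMap)
  have h := (φ.hasFDerivAt).comp_hasDerivAt x hf
  exact h

end aux

/-- Lemma 3 of the DHA paper: with `Z(F) = tr(GᵀF(FᵀF+εI)⁻¹FᵀG)`, `GᵀG = I`, and
`R = (FᵀF+εI)⁻¹FᵀG`, the gradient of `Z` at `F` is `M = 2GRᵀ − 2FRRᵀ`, i.e. the
directional derivative of `Z` at `F` along any `H` is `tr(Mᵀ H)`. -/
theorem dha_gradient (T V k : ℕ)
    (G : Matrix (Fin T) (Fin k) ℝ) (hG : Gᵀ * G = 1)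
    (ε : ℝ) (hε : 0 < ε)
    (F : Matrix (Fin T) (Fin V) ℝ)
    (R : Matrix (Fin V) (Fin k) ℝ)
    (hR : R = (Fᵀ * F + ε • (1 : Matrix (Fin V) (Fin V) ℝ))⁻¹ * (Fᵀ * G)) :
    ∀ H : Matrix (Fin T) (Fin V) ℝ,
      HasDerivAt
        (fun t : ℝ =>
          Matrix.trace (Gᵀ * ((F + t • H) *
            ((F + t • H)ᵀ * (F + t • H) + ε • (1 : Matrix (Fin V) (Fin V) ℝ))⁻¹ *
            (F + t • H)ᵀ) * G))
        (Matrix.trace ((2 • (G * Rᵀ) - 2 • (F * (R * Rᵀ)))ᵀ * H)) 0 := by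
  intro H
  set A₀ : Matrix (Fin V) (Fin V) ℝ := Fᵀ * F + ε • 1 with hA₀def
  have hsd : (Fᵀ * F).PosSemidef := by
    simpa using Matrix.posSemidef_conjTranspose_mul_self F
  have hpd1 : (ε • (1 : Matrix (Fin V) (Fin V) ℝ)).PosDef := by
    have : ε • (1 : Matrix (Fin V) (Fin V) ℝ) = Matrix.diagonal (fun _ => ε) := by
      ext i j
      by_cases h : i = j <;> simp [h, Matrix.one_apply, Matrix.diagonal]
    rw [this]
    exact Matrix.posDef_diagonal_iff.mpr fun _ => hε
  have hpd : A₀.PosDef := Matrix.PosDef.posSemidef_add hsd hpd1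
  obtain ⟨u, hu⟩ := hpd.isUnit
  set S₀ : Matrix (Fin V) (Fin V) ℝ := A₀⁻¹ with hS₀def
  have hui : (↑u⁻¹ : Matrix (Fin V) (Fin V) ℝ) = S₀ := by
    rw [hS₀def, Matrix.nonsing_inv_eq_ringInverse, ← hu, Ring.inverse_unit]
  -- the path t ↦ F + t H
  have hf : HasDerivAt (fun t : ℝ => F + t • H) H 0 := by
    have := ((hasDerivAt_id (0:ℝ)).smul_const H).const_add F
    simp only [id_eq, one_smul] at this
    exact this
  have hfT : HasDerivAt (fun t : ℝ => (F + t • H)ᵀ) Hᵀ 0 := hf.matTranspose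
  have hf0 : F + (0:ℝ) • H = F := by simp
  -- t ↦ A(t)
  set A' : Matrix (Fin V) (Fin V) ℝ := Hᵀ * F + Fᵀ * H with hA'def
  have hA : HasDerivAt (fun t : ℝ => (F + t • H)ᵀ * (F + t • H) + ε • 1) A' 0 := by
    have := (hfT.matMul hf).add_const (ε • (1 : Matrix (Fin V) (Fin V) ℝ))
    simp only [hf0] at this
    exact this
  have hA0 : (F + (0:ℝ) • H)ᵀ * (F + (0:ℝ) • H) + ε • (1 : Matrix (Fin V) (Fin V) ℝ) = A₀ := by
    rw [hf0]
  -- derivative of the inverse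
  set S' : Matrix (Fin V) (Fin V) ℝ := -(S₀ * A' * S₀) with hS'def
  have hS : HasDerivAt
      (fun t : ℝ => Ring.inverse ((F + t • H)ᵀ * (F + t • H) + ε • (1 : Matrix (Fin V) (Fin V) ℝ)))
      S' 0 := by
    have hinv := hasFDerivAt_ringInverse (𝕜 := ℝ) u
    rw [hu, ← hA0] at hinv
    have h2 := hinv.comp_hasDerivAt 0 hA
    have : (-(ContinuousLinearMap.mulLeftRight ℝ (Matrix (Fin V) (Fin V) ℝ) ↑u⁻¹ ↑u⁻¹)) A' = S' := by
      simp [ContinuousLinearMap.mulLeftRight_apply, hui, hS'def, Matrix.mul_assoc]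
    rw [← this]
    exact h2
  -- replace ⁻¹ by Ring.inverse
  have hinv_eq : ∀ t : ℝ,
      ((F + t • H)ᵀ * (F + t • H) + ε • (1 : Matrix (Fin V) (Fin V) ℝ))⁻¹
      = Ring.inverse ((F + t • H)ᵀ * (F + t • H) + ε • (1 : Matrix (Fin V) (Fin V) ℝ)) :=
    fun t => Matrix.nonsing_inv_eq_ringInverse _
  have hS0val : Ring.inverse (Fᵀ * F + ε • (1 : Matrix (Fin V) (Fin V) ℝ)) = S₀ :=
    (Matrix.nonsing_inv_eq_ringInverse _).symm
  -- product chain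
  have hP : HasDerivAt
      (fun t : ℝ => (F + t • H) *
        Ring.inverse ((F + t • H)ᵀ * (F + t • H) + ε • (1 : Matrix (Fin V) (Fin V) ℝ)))
      (H * S₀ + F * S') 0 := by
    have := hf.matMul hS
    simpa [hf0, hS0val] using this
  have hQ : HasDerivAt
      (fun t : ℝ => (F + t • H) *
        Ring.inverse ((F + t • H)ᵀ * (F + t • H) + ε • (1 : Matrix (Fin V) (Fin V) ℝ)) *
        (F + t • H)ᵀ)
      ((H * S₀ + F * S') * Fᵀ + F * S₀ * Hᵀ) 0 := by
    have := hP.matMul hfT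
    simpa [hf0, hS0val] using this
  -- trace linear map
  let φ : Matrix (Fin T) (Fin T) ℝ →ₗ[ℝ] ℝ :=
    { toFun := fun Q => Matrix.trace (Gᵀ * Q * G)
      map_add' := fun X Y => by
        simp [Matrix.mul_add, Matrix.add_mul, Matrix.trace_add]
      map_smul' := fun c X => by
        simp [Matrix.mul_smul, Matrix.smul_mul, Matrix.trace_smul] }
  have hZ := (LinearMap.toContinuousLinearMap φ).hasFDerivAt.comp_hasDerivAt 0 hQ
  have hZ' : HasDerivAt
      (fun t : ℝ =>
        Matrix.trace (Gᵀ * ((F + t • H) *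
          ((F + t • H)ᵀ * (F + t • H) + ε • (1 : Matrix (Fin V) (Fin V) ℝ))⁻¹ *
          (F + t • H)ᵀ) * G))
      (Matrix.trace (Gᵀ * ((H * S₀ + F * S') * Fᵀ + F * S₀ * Hᵀ) * G)) 0 := by
    have : (fun t : ℝ =>
        Matrix.trace (Gᵀ * ((F + t • H) *
          ((F + t • H)ᵀ * (F + t • H) + ε • (1 : Matrix (Fin V) (Fin V) ℝ))⁻¹ *
          (F + t • H)ᵀ) * G)) =
        (fun t : ℝ =>
          φ ((F + t • H) *
            Ring.inverse ((F + t • H)ᵀ * (F + t • H) + ε • (1 : Matrix (Fin V) (Fin V) ℝ)) *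
            (F + t • H)ᵀ)) := by
      funext t; rw [hinv_eq t]; rfl
    rw [this]
    exact hZ
  -- algebraic identification of the derivative value
  have hST : S₀ᵀ = S₀ := by
    rw [hS₀def, Matrix.transpose_nonsing_inv]
    congr 1
    rw [hA₀def]
    simp [Matrix.transpose_add, Matrix.transpose_mul]
  have hRS : R = S₀ * (Fᵀ * G) := by rw [hR]
  have hkey : Matrix.trace (Gᵀ * ((H * S₀ + F * S') * Fᵀ + F * S₀ * Hᵀ) * G)
      = Matrix.trace ((2 • (G * Rᵀ) - 2 • (F * (R * Rᵀ)))ᵀ * H) := by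
    simp only [hS'def, hA'def, Matrix.mul_add, Matrix.add_mul, Matrix.mul_neg, Matrix.neg_mul,
      Matrix.trace_add, Matrix.trace_neg, Matrix.mul_assoc, Matrix.sub_mul, Matrix.trace_sub,
      two_smul, Matrix.transpose_add, Matrix.transpose_mul, Matrix.transpose_smul,
      Matrix.transpose_transpose, Matrix.smul_mul, Matrix.transpose_sub]
    have e1 : (Gᵀ * (H * (S₀ * (Fᵀ * G)))).trace = (R * (Gᵀ * H)).trace := by
      rw [← hRS, ← Matrix.mul_assoc, Matrix.trace_mul_comm]
    have e2 : (Gᵀ * (F * (S₀ * (Hᵀ * G)))).trace = (R * (Gᵀ * H)).trace := by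
      have m2 : Gᵀ * (F * (S₀ * (Hᵀ * G))) = (Gᵀ * (H * (S₀ * (Fᵀ * G))))ᵀ := by
        simp [Matrix.transpose_mul, Matrix.transpose_transpose, hST, Matrix.mul_assoc]
      rw [m2, Matrix.trace_transpose, e1]
    have e3 : (Gᵀ * (F * (S₀ * (Fᵀ * (H * (S₀ * (Fᵀ * G))))))).trace
        = (R * (Rᵀ * (Fᵀ * H))).trace := by
      have m3 : Gᵀ * (F * (S₀ * (Fᵀ * (H * (S₀ * (Fᵀ * G)))))) = Rᵀ * (Fᵀ * H) * R := by
        rw [hRS]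
        simp [Matrix.transpose_mul, hST, Matrix.mul_assoc]
      rw [m3, Matrix.trace_mul_cycle, Matrix.mul_assoc]
    have e4 : (Gᵀ * (F * (S₀ * (Hᵀ * (F * (S₀ * (Fᵀ * G))))))).trace
        = (R * (Rᵀ * (Fᵀ * H))).trace := by
      have m4 : Gᵀ * (F * (S₀ * (Hᵀ * (F * (S₀ * (Fᵀ * G))))))
          = (Gᵀ * (F * (S₀ * (Fᵀ * (H * (S₀ * (Fᵀ * G)))))))ᵀ := by
        simp [Matrix.transpose_mul, Matrix.transpose_transpose, hST, Matrix.mul_assoc]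
      rw [m4, Matrix.trace_transpose, e3]
    rw [e1, e2, e3, e4]
    ring
  rw [← hkey]
  exact hZ'
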